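/- Let \mu be a finite Borel measure with infinite support that solves an indeterminate Hamburger moment problem, given by \mu(\partial) = \langle \delta_1, E(\partial)\delta_1 \rangle for the spectral measure E of a canonical selfadjoint extension of a nonselfadjoint Jacobi operator. Define \nu_1(\partial) = C^{-1}\int_\partial (1+x^2)^{-1} d\mu(x) with C = \int_{\mathbb{R}}(1+x^2)^{-1} d\mu. Let \{R_{k-1}\} be the orthonormal polynomials in L_2(\mathbb{R},\nu_1), and put f_{k-1}(t) = (\sqrt{C}(t-i))^{-1} R_{k-1}(t). Then \{f_{k-1}\}_{k=1}^\infty is an orthonormal basis of L_2(\mathbb{R},\mu) and each f_{k-1} lies in the domain of the multiplication operator M_\mu. -/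

import Mathlib

open MeasureTheory Polynomial
open scoped NNReal ENNReal

/-- Any family of polynomials over a field with `natDegree (P k) = k` and nonzero
leading coefficients spans the whole polynomial ring. -/
lemma stmt9_span_aux (P : ℕ → Polynomial ℂ) (hdeg : ∀ k, (P k).natDegree = k)
    (hl : ∀ k, (P k).leadingCoeff ≠ 0) :
    ∀ n (q : Polynomial ℂ), q.natDegree ≤ n → q ∈ Submodule.span ℂ (Set.range P) := by
  have hPc : ∀ k, (P k).coeff k ≠ 0 := by
    intro k
    have := hl k
    rwa [Polynomial.leadingCoeff, hdeg k] at this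
  intro n
  induction n with
  | zero =>
    intro q hq
    have : q = (q.coeff 0 / (P 0).coeff 0) • P 0 := by
      ext m
      cases m with
      | zero =>
        rw [Polynomial.coeff_smul, smul_eq_mul, div_mul_cancel₀ _ (hPc 0)]
      | succ m =>
        rw [Polynomial.coeff_smul,
          Polynomial.coeff_eq_zero_of_natDegree_lt (lt_of_le_of_lt hq (Nat.succ_pos m)),
          Polynomial.coeff_eq_zero_of_natDegree_lt
            (lt_of_le_of_lt (le_of_eq (hdeg 0)) (Nat.succ_pos m)), smul_zero]
    rw [this]
    exact Submodule.smul_mem _ _ (Submodule.subset_span ⟨0, rfl⟩)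
  | succ n ih =>
    intro q hq
    set c : ℂ := q.coeff (n + 1) / (P (n + 1)).coeff (n + 1) with hc
    have hq' : (q - c • P (n + 1)).natDegree ≤ n := by
      refine Polynomial.natDegree_le_iff_coeff_eq_zero.mpr fun m hm => ?_
      rw [Polynomial.coeff_sub, Polynomial.coeff_smul, smul_eq_mul]
      rcases eq_or_lt_of_le (Nat.succ_le_of_lt hm) with h | h
      · rw [← h, hc, div_mul_cancel₀ _ (hPc (n + 1)), sub_self]
      · rw [Polynomial.coeff_eq_zero_of_natDegree_lt (lt_of_le_of_lt hq h),
          Polynomial.coeff_eq_zero_of_natDegree_lt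
            (lt_of_le_of_lt (le_of_eq (hdeg (n + 1))) h), mul_zero, sub_zero]
    have hrw : q = (q - c • P (n + 1)) + c • P (n + 1) := by ring
    rw [hrw]
    exact Submodule.add_mem _ (ih _ hq')
      (Submodule.smul_mem _ _ (Submodule.subset_span ⟨n + 1, rfl⟩))

/-- Complex polynomials evaluated on `ℝ` are in `L²(μ)` when all moments are finite. -/
lemma stmt9_memL2_poly (μ : Measure ℝ) [IsFiniteMeasure μ]
    (hmom : ∀ k : ℕ, Integrable (fun x : ℝ => x ^ k) μ) (q : Polynomial ℂ) :
    MemLp (fun t : ℝ => q.eval (t : ℂ)) 2 μ := by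
  induction q using Polynomial.induction_on' with
  | add p q hp hq => simp only [Polynomial.eval_add]; exact hp.add hq
  | monomial n c =>
    simp only [Polynomial.eval_monomial]
    have base : MemLp (fun t : ℝ => ((t : ℂ)) ^ n) 2 μ := by
      have hm : AEStronglyMeasurable (fun t : ℝ => ((t : ℂ)) ^ n) μ :=
        (Complex.continuous_ofReal.pow n).aestronglyMeasurable
      rw [memLp_two_iff_integrable_sq_norm hm]
      refine (hmom (2 * n)).congr ?_
      filter_upwards with t
      have h1 : ‖((t : ℂ)) ^ n‖ = |t| ^ n := by
        rw [norm_pow, Complex.norm_real, Real.norm_eq_abs]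
      rw [h1, ← abs_pow, sq_abs, ← pow_mul, mul_comm n 2]
    exact base.const_mul c

theorem stmt9 (μ : Measure ℝ) [IsFiniteMeasure μ]
    (hsupp : ∀ s : Set ℝ, μ sᶜ = 0 → s.Infinite)
    (hmom : ∀ k : ℕ, Integrable (fun x : ℝ => x ^ k) μ)
    (hindet : ∃ ν : Measure ℝ, ν ≠ μ ∧ (∀ k : ℕ, Integrable (fun x : ℝ => x ^ k) ν) ∧
      ∀ k : ℕ, ∫ x : ℝ, x ^ k ∂ν = ∫ x : ℝ, x ^ k ∂μ)
    (hpolydense : Dense {f : Lp ℂ 2 μ | ∃ p : Polynomial ℂ,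
      (f : ℝ → ℂ) =ᵐ[μ] fun t : ℝ => p.eval (t : ℂ)})
    (Cmu : ℝ) (hC : Cmu = ∫ x : ℝ, (1 + x ^ 2)⁻¹ ∂μ)
    (ν₁ : Measure ℝ)
    (hν₁ : ν₁ = (ENNReal.ofReal Cmu)⁻¹ •
      μ.withDensity fun x => ENNReal.ofReal ((1 + x ^ 2)⁻¹))
    (R : ℕ → Polynomial ℝ)
    (hdeg : ∀ k, (R k).natDegree = k)
    (hlead : ∀ k, 0 < (R k).leadingCoeff)
    (hRON : ∀ j k, ∫ x : ℝ, (R j).eval x * (R k).eval x ∂ν₁ =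
      if j = k then 1 else 0) :
    ∃ F : ℕ → Lp ℂ 2 μ,
      (∀ k, (F k : ℝ → ℂ) =ᵐ[μ]
        fun t : ℝ => (Real.sqrt Cmu * ((t : ℂ) - Complex.I))⁻¹ * (((R k).eval t : ℝ) : ℂ)) ∧
      Orthonormal ℂ F ∧
      Dense (↑(Submodule.span ℂ (Set.range F)) : Set (Lp ℂ 2 μ)) ∧
      ∀ k, MemLp (fun t : ℝ =>
        (t : ℂ) * ((Real.sqrt Cmu * ((t : ℂ) - Complex.I))⁻¹ * (((R k).eval t : ℝ) : ℂ)))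
        2 μ := by
  classical
  -- positivity of Cmu
  have hμ0 : μ ≠ 0 := by
    intro h
    have := hsupp ∅ (by simp [h])
    exact this Set.finite_empty
  have hcont : Continuous fun x : ℝ => (1 + x ^ 2)⁻¹ := by
    refine Continuous.inv₀ (by continuity) fun x => ?_
    positivity
  have hintw : Integrable (fun x : ℝ => (1 + x ^ 2)⁻¹) μ := by
    refine (integrable_const (1 : ℝ)).mono' hcont.aestronglyMeasurable ?_
    filter_upwards with x
    rw [Real.norm_eq_abs, abs_of_nonneg (by positivity)]
    rw [inv_le_one_iff₀]
    right
    nlinarith [sq_nonneg x]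
  have hCpos : 0 < Cmu := by
    rw [hC, integral_pos_iff_support_of_nonneg (fun x => by positivity) hintw]
    have hs : Function.support (fun x : ℝ => (1 + x ^ 2)⁻¹) = Set.univ := by
      ext x
      simp only [Function.mem_support, Set.mem_univ, iff_true]
      positivity
    rw [hs]
    exact Measure.measure_univ_pos.mpr hμ0
  have hsqpos : 0 < Real.sqrt Cmu := Real.sqrt_pos.mpr hCpos
  set w : ℝ → ℂ := fun t => (Real.sqrt Cmu : ℂ) * ((t : ℂ) - Complex.I) with hw
  have hwne : ∀ t : ℝ, w t ≠ 0 := by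
    intro t
    apply mul_ne_zero
    · exact_mod_cast hsqpos.ne'
    · intro h
      have := congrArg Complex.im h
      simp at this
  have habs : ∀ t : ℝ, ‖((t : ℂ) - Complex.I)‖ = Real.sqrt (t ^ 2 + 1) := by
    intro t
    rw [Complex.norm_def, Complex.normSq_apply]
    simp
    ring_nf
  have habs1 : ∀ t : ℝ, 1 ≤ ‖((t : ℂ) - Complex.I)‖ := by
    intro t
    rw [habs t, Real.le_sqrt one_pos.le (by positivity)]
    nlinarith [sq_nonneg t]
  have habs2 : ∀ t : ℝ, |t| ≤ ‖((t : ℂ) - Complex.I)‖ := by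
    intro t
    rw [habs t, Real.le_sqrt (abs_nonneg t) (by positivity), sq_abs]
    nlinarith
  have habspos : ∀ t : ℝ, 0 < ‖((t : ℂ) - Complex.I)‖ :=
    fun t => lt_of_lt_of_le one_pos (habs1 t)
  -- the functions
  set g : Polynomial ℂ → ℝ → ℂ := fun q t => (w t)⁻¹ * q.eval (t : ℂ) with hg
  have hwnorm : ∀ t : ℝ, ‖w t‖ = Real.sqrt Cmu * ‖((t : ℂ) - Complex.I)‖ := by
    intro t
    rw [hw]
    simp only [norm_mul, Complex.norm_real, Real.norm_eq_abs, abs_of_nonneg hsqpos.le]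
  have hgcont : ∀ q : Polynomial ℂ, Continuous (g q) := by
    intro q
    refine Continuous.mul (Continuous.inv₀ ?_ hwne) ?_
    · exact continuous_const.mul (Complex.continuous_ofReal.sub continuous_const)
    · exact q.continuous.comp Complex.continuous_ofReal
  have hdom : ∀ q : Polynomial ℂ,
      MemLp (fun t : ℝ => ((Real.sqrt Cmu : ℝ) : ℂ)⁻¹ * q.eval (t : ℂ)) 2 μ := by
    intro q
    have := (stmt9_memL2_poly μ hmom q).const_mul (((Real.sqrt Cmu : ℝ) : ℂ)⁻¹)
    simpa using this
  have hRHSnorm : ∀ (q : Polynomial ℂ) (t : ℝ),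
      ‖((Real.sqrt Cmu : ℝ) : ℂ)⁻¹ * q.eval (t : ℂ)‖
        = (Real.sqrt Cmu)⁻¹ * ‖q.eval (t : ℂ)‖ := by
    intro q t
    rw [norm_mul, norm_inv, Complex.norm_real, Real.norm_eq_abs, abs_of_nonneg hsqpos.le]
  have memg : ∀ q : Polynomial ℂ, MemLp (g q) 2 μ := by
    intro q
    refine (hdom q).of_le (hgcont q).aestronglyMeasurable
      (Filter.Eventually.of_forall fun t => ?_)
    rw [hRHSnorm q t, hg]
    simp only [norm_mul, norm_inv]
    rw [hwnorm t]
    have h1 : (Real.sqrt Cmu * ‖((t : ℂ) - Complex.I)‖)⁻¹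
        ≤ (Real.sqrt Cmu)⁻¹ :=
      inv_anti₀ hsqpos (le_mul_of_one_le_right hsqpos.le (habs1 t))
    exact mul_le_mul_of_nonneg_right h1 (norm_nonneg _)
  have memtg : ∀ q : Polynomial ℂ, MemLp (fun t : ℝ => (t : ℂ) * g q t) 2 μ := by
    intro q
    refine (hdom q).of_le
      ((Complex.continuous_ofReal.mul (hgcont q)).aestronglyMeasurable)
      (Filter.Eventually.of_forall fun t => ?_)
    rw [hRHSnorm q t, hg]
    simp only [norm_mul, norm_inv, Complex.norm_real, Real.norm_eq_abs]
    rw [hwnorm t]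
    have h2 : |t| * (‖((t : ℂ) - Complex.I)‖)⁻¹ ≤ 1 := by
      rw [← div_eq_mul_inv]
      exact div_le_one_of_le₀ (habs2 t) (habspos t).le
    have h1 : |t| * (Real.sqrt Cmu * ‖((t : ℂ) - Complex.I)‖)⁻¹
        ≤ (Real.sqrt Cmu)⁻¹ := by
      calc |t| * (Real.sqrt Cmu * ‖((t : ℂ) - Complex.I)‖)⁻¹
          = (Real.sqrt Cmu)⁻¹ * (|t| * (‖((t : ℂ) - Complex.I)‖)⁻¹) := by
            rw [mul_inv]; ring
        _ ≤ (Real.sqrt Cmu)⁻¹ * 1 := mul_le_mul_of_nonneg_left h2 (by positivity)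
        _ = (Real.sqrt Cmu)⁻¹ := mul_one _
    calc |t| * ((Real.sqrt Cmu * ‖((t : ℂ) - Complex.I)‖)⁻¹ * ‖q.eval (t : ℂ)‖)
        = (|t| * (Real.sqrt Cmu * ‖((t : ℂ) - Complex.I)‖)⁻¹) * ‖q.eval (t : ℂ)‖ := by
          ring
      _ ≤ (Real.sqrt Cmu)⁻¹ * ‖q.eval (t : ℂ)‖ :=
          mul_le_mul_of_nonneg_right h1 (norm_nonneg _)
  -- the mapped polynomials
  set P : ℕ → Polynomial ℂ := fun k => (R k).map (algebraMap ℝ ℂ) with hP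
  have heval : ∀ (k : ℕ) (t : ℝ), (P k).eval (t : ℂ) = (((R k).eval t : ℝ) : ℂ) := by
    intro k t
    rw [hP]
    rw [Polynomial.eval_map, show ((t : ℝ) : ℂ) = algebraMap ℝ ℂ t from rfl,
      Polynomial.eval₂_at_apply]
    rfl
  have hPdeg : ∀ k, (P k).natDegree = k := by
    intro k
    rw [hP]
    rw [Polynomial.natDegree_map_eq_of_injective (algebraMap ℝ ℂ).injective, hdeg]
  have hPlead : ∀ k, (P k).leadingCoeff ≠ 0 := by
    intro k
    rw [Polynomial.leadingCoeff, hPdeg k, hP]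
    simp only [Polynomial.coeff_map]
    have : (R k).coeff k ≠ 0 := by
      have := (hlead k).ne'
      rwa [Polynomial.leadingCoeff, hdeg k] at this
    intro h
    rw [show (algebraMap ℝ ℂ) ((R k).coeff k) = (((R k).coeff k : ℝ) : ℂ) from rfl] at h
    exact this (by exact_mod_cast h)
  have hspan : ∀ q : Polynomial ℂ, q ∈ Submodule.span ℂ (Set.range P) :=
    fun q => stmt9_span_aux P hPdeg hPlead q.natDegree q le_rfl
  -- definition of F
  have hgP : ∀ k : ℕ, g (P k) = fun t : ℝ =>
      (Real.sqrt Cmu * ((t : ℂ) - Complex.I))⁻¹ * (((R k).eval t : ℝ) : ℂ) := by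
    intro k
    funext t
    show (w t)⁻¹ * (P k).eval (t : ℂ) = _
    rw [heval k t, hw]
  have memgk : ∀ k : ℕ, MemLp (fun t : ℝ =>
      (Real.sqrt Cmu * ((t : ℂ) - Complex.I))⁻¹ * (((R k).eval t : ℝ) : ℂ)) 2 μ := by
    intro k
    rw [← hgP k]
    exact memg (P k)
  refine ⟨fun k => (memgk k).toLp _, fun k => MemLp.coeFn_toLp (memgk k), ?_, ?_, ?_⟩
  · -- orthonormality
    -- the integral identity against ν₁
    have hmeasw : Measurable fun x : ℝ => Real.toNNReal ((1 + x ^ 2)⁻¹) :=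
      hcont.measurable.real_toNNReal
    have hnu : ∀ j k : ℕ, ∫ x : ℝ, (R j).eval x * (R k).eval x ∂ν₁
        = Cmu⁻¹ * ∫ x : ℝ, (1 + x ^ 2)⁻¹ * ((R j).eval x * (R k).eval x) ∂μ := by
      intro j k
      rw [hν₁, integral_smul_measure]
      rw [show (μ.withDensity fun x => ENNReal.ofReal ((1 + x ^ 2)⁻¹))
          = (μ.withDensity fun x => ((Real.toNNReal ((1 + x ^ 2)⁻¹) : ℝ≥0) : ℝ≥0∞)) from rfl]
      rw [integral_withDensity_eq_integral_smul hmeasw]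
      rw [ENNReal.toReal_inv, ENNReal.toReal_ofReal hCpos.le, smul_eq_mul]
      congr 1
      refine integral_congr_ae (Filter.Eventually.of_forall fun x => ?_)
      simp only [NNReal.smul_def]
      rw [Real.coe_toNNReal _ (by positivity), smul_eq_mul]
    have hreal : ∀ j k : ℕ, ∫ t : ℝ, (Cmu * (1 + t ^ 2))⁻¹ * ((R j).eval t * (R k).eval t) ∂μ
        = if j = k then 1 else 0 := by
      intro j k
      rw [← hRON j k, hnu j k, ← integral_const_mul]
      refine integral_congr_ae (Filter.Eventually.of_forall fun t => ?_)
      simp only [mul_inv]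
      ring
    rw [orthonormal_iff_ite]
    intro j k
    have hj := MemLp.coeFn_toLp (memgk j)
    have hk := MemLp.coeFn_toLp (memgk k)
    rw [MeasureTheory.L2.inner_def]
    have hsq : (Real.sqrt Cmu : ℂ) * (Real.sqrt Cmu : ℂ) = (Cmu : ℂ) := by
      norm_cast
      exact Real.mul_self_sqrt hCpos.le
    have hint : ∫ a : ℝ, (inner ℂ (((memgk j).toLp _ : Lp ℂ 2 μ) a)
          (((memgk k).toLp _ : Lp ℂ 2 μ) a) : ℂ) ∂μ
        = ∫ t : ℝ, (((Cmu * (1 + t ^ 2))⁻¹ * ((R j).eval t * (R k).eval t) : ℝ) : ℂ) ∂μ := by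
      refine integral_congr_ae ?_
      filter_upwards [hj, hk] with t h1 h2
      rw [RCLike.inner_apply, h1, h2]
      have hz1 : ((t : ℂ) + Complex.I) ≠ 0 := by
        intro h; have := congrArg Complex.im h; simp at this
      have hz2 : ((t : ℂ) - Complex.I) ≠ 0 := by
        intro h; have := congrArg Complex.im h; simp at this
      have hz3 : (Real.sqrt Cmu : ℂ) ≠ 0 := by
        exact_mod_cast hsqpos.ne'
      have hz4 : ((1 : ℂ) + (t : ℂ) ^ 2) ≠ 0 := by
        rw [show (1 : ℂ) + (t : ℂ) ^ 2 = ((1 + t ^ 2 : ℝ) : ℂ) by push_cast; ring]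
        exact_mod_cast (by positivity : (0 : ℝ) < 1 + t ^ 2).ne'
      have hz5 : (Cmu : ℂ) ≠ 0 := by exact_mod_cast hCpos.ne'
      have hcon : (starRingEnd ℂ) ((Real.sqrt Cmu * ((t : ℂ) - Complex.I))⁻¹
            * (((R j).eval t : ℝ) : ℂ))
          = ((Real.sqrt Cmu : ℂ) * ((t : ℂ) + Complex.I))⁻¹ * (((R j).eval t : ℝ) : ℂ) := by
        rw [map_mul, map_inv₀, map_mul, map_sub, Complex.conj_I, Complex.conj_ofReal,
          Complex.conj_ofReal, Complex.conj_ofReal, sub_neg_eq_add]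
      rw [hcon]
      push_cast
      field_simp
      rw [← hsq]
      ring_nf
      rw [Complex.I_sq]
      ring_nf
    rw [hint]
    rw [show (∫ t : ℝ, (((Cmu * (1 + t ^ 2))⁻¹ * ((R j).eval t * (R k).eval t) : ℝ) : ℂ) ∂μ)
        = (((∫ t : ℝ, (Cmu * (1 + t ^ 2))⁻¹ * ((R j).eval t * (R k).eval t) ∂μ : ℝ)) : ℂ) from
      integral_ofReal, hreal j k]
    split_ifs <;> norm_num
  · -- density
    have key : ∀ q : Polynomial ℂ, (memg q).toLp (g q) ∈
        Submodule.span ℂ (Set.range fun k => (memgk k).toLp _) := by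
      intro q
      refine Submodule.span_induction ?_ ?_ ?_ ?_ (hspan q)
      · intro x hx
        obtain ⟨k, rfl⟩ := hx
        have he : (memg (P k)).toLp (g (P k)) = (memgk k).toLp _ :=
          MemLp.toLp_congr (memg (P k)) (memgk k) (Filter.EventuallyEq.of_eq (hgP k))
        rw [he]
        exact Submodule.subset_span ⟨k, rfl⟩
      · have h0 : g 0 = (0 : ℝ → ℂ) := by
          funext t
          show (w t)⁻¹ * (0 : Polynomial ℂ).eval (t : ℂ) = 0
          simp
        rw [MemLp.toLp_congr (memg 0) (MemLp.zero) (Filter.EventuallyEq.of_eq h0),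
          MemLp.toLp_zero]
        exact Submodule.zero_mem _
      · intro x y _ _ ihx ihy
        have hadd : g (x + y) = g x + g y := by
          funext t
          show (w t)⁻¹ * (x + y).eval (t : ℂ) = (w t)⁻¹ * x.eval (t : ℂ) + (w t)⁻¹ * y.eval (t : ℂ)
          rw [Polynomial.eval_add, mul_add]
        rw [MemLp.toLp_congr (memg (x + y)) ((memg x).add (memg y))
          (Filter.EventuallyEq.of_eq hadd), MemLp.toLp_add (memg x) (memg y)]
        exact Submodule.add_mem _ ihx ihy
      · intro a x _ ihx
        have hsmul : g (a • x) = a • g x := by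
          funext t
          show (w t)⁻¹ * (a • x).eval (t : ℂ) = a * ((w t)⁻¹ * x.eval (t : ℂ))
          rw [Polynomial.eval_smul, smul_eq_mul]
          ring
        rw [MemLp.toLp_congr (memg (a • x)) ((memg x).const_smul a)
          (Filter.EventuallyEq.of_eq hsmul), MemLp.toLp_const_smul a (memg x)]
        exact Submodule.smul_mem _ _ ihx
    refine hpolydense.mono ?_
    rintro f ⟨p, hp⟩
    set q : Polynomial ℂ := Polynomial.C ((Real.sqrt Cmu : ℝ) : ℂ) *
      ((Polynomial.X : Polynomial ℂ) - Polynomial.C Complex.I) * p with hq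
    have hgq : g q = fun t : ℝ => p.eval (t : ℂ) := by
      funext t
      show (w t)⁻¹ * q.eval (t : ℂ) = p.eval (t : ℂ)
      rw [hq]
      simp only [Polynomial.eval_mul, Polynomial.eval_sub, Polynomial.eval_X, Polynomial.eval_C]
      exact inv_mul_cancel_left₀ (hwne t) _
    have hfq : f = (memg q).toLp (g q) := by
      apply Lp.ext
      refine hp.trans ?_
      rw [← hgq]
      exact (MemLp.coeFn_toLp (memg q)).symm
    rw [hfq]
    exact key q
  · -- MemLp of t * f_k
    intro k
    have h1 : (fun t : ℝ => (t : ℂ) * g (P k) t) = fun t : ℝ =>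
        (t : ℂ) * ((Real.sqrt Cmu * ((t : ℂ) - Complex.I))⁻¹ * (((R k).eval t : ℝ) : ℂ)) := by
      funext t
      rw [hgP k]
    rw [← h1]
    exact memtg (P k)
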